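/- Point 2 (first part) of the main lemma: under the contraction condition, the first martingale difference satisfies |d_1| ≤ K_{n−1}(ρ) G_{X_1}(X_1) almost surely, where G_{X_1}(x) = ∫ d(x, x') P_{X_1}(dx') and P_{X_1} is the distribution of X_1. -/

import Mathlib

open MeasureTheory ProbabilityTheory Finset

/-- `K_t(ρ) = (1 - ρ^(t+1))/(1 - ρ)`. -/
noncomputable def Kgeom (ρ : ℝ) (t : ℕ) : ℝ := (1 - ρ ^ (t + 1)) / (1 - ρ)

/-- Backward recursion defining the conditional expectation functionals:
`gAux Pε F n f k = g_{n-k}`, i.e. `gAux _ _ _ _ 0 = g_n = f` and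
`g_{t-1}(x) = ∫ g_t(x_1,…,x_{t-1}, F_t(x_{t-1}, y)) Pε(dy)`.
For the Markov chain `X_t = F_t(X_{t-1}, ε_t)`, `gAux Pε F n f (n - t)` applied to
`(X_1,…,X_t,…)` is a version of `E[f(X_1,…,X_n) | X_1,…,X_t]`. -/
noncomputable def gAux {𝓧 𝓨 : Type*} [MeasurableSpace 𝓨] (Pε : Measure 𝓨)
    (F : ℕ → 𝓧 → 𝓨 → 𝓧) (n : ℕ) (f : (ℕ → 𝓧) → ℝ) : ℕ → (ℕ → 𝓧) → ℝ
  | 0 => f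
  | (k + 1) => fun x =>
      ∫ y, gAux Pε F n f k (Function.update x (n - k) (F (n - k) (x (n - k - 1)) y)) ∂Pε

section aux

variable {𝓧 : Type*} [MetricSpace 𝓧] [MeasurableSpace 𝓧]
    {𝓨 : Type*} [MetricSpace 𝓨] [MeasurableSpace 𝓨]
    (Pε : Measure 𝓨) [IsProbabilityMeasure Pε]
    (F : ℕ → 𝓧 → 𝓨 → 𝓧) (n : ℕ) (f : (ℕ → 𝓧) → ℝ)

lemma measurable_updF (m : ℕ) (hmF : Measurable (Function.uncurry (F m))) :
    Measurable (fun p : (ℕ → 𝓧) × 𝓨 => Function.update p.1 m (F m (p.1 (m - 1)) p.2)) := by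
  apply measurable_pi_lambda
  intro i
  simp only [Function.update_apply]
  by_cases h : i = m
  · simp only [h, if_pos rfl]
    have h2 : Measurable (fun p : (ℕ → 𝓧) × 𝓨 => (p.1 (m - 1), p.2)) :=
      ((measurable_pi_apply _).comp measurable_fst).prodMk measurable_snd
    exact (show Measurable (Function.uncurry (F m) ∘ (fun p : (ℕ → 𝓧) × 𝓨 => (p.1 (m - 1), p.2)))
      from hmF.comp h2)
  · simp only [if_neg h]
    exact (measurable_pi_apply i).comp measurable_fst

lemma gAux_measurable (hmF : ∀ t, Measurable (Function.uncurry (F t)))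
    (hmf : Measurable f) : ∀ k, Measurable (gAux Pε F n f k)
  | 0 => hmf
  | (k + 1) => by
    have h1 : Measurable (fun p : (ℕ → 𝓧) × 𝓨 =>
        gAux Pε F n f k (Function.update p.1 (n - k) (F (n - k) (p.1 (n - k - 1)) p.2))) :=
      (gAux_measurable hmF hmf k).comp (measurable_updF F (n - k) (hmF (n - k)))
    exact (StronglyMeasurable.integral_prod_right' (ν := Pε) h1.stronglyMeasurable).measurable

lemma gAux_lip (hmF : ∀ t, Measurable (Function.uncurry (F t))) (hmf : Measurable f)
    (ρ : ℝ) (hρ0 : 0 ≤ ρ)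
    (hcontract : ∀ t x x', ∫ y, dist (F t x y) (F t x' y) ∂Pε ≤ ρ * dist x x')
    (hintc : ∀ t x x', Integrable (fun y => dist (F t x y) (F t x' y)) Pε)
    (hintH : ∀ t x y₀, Integrable (fun y => dist (F t x y) (F t x y₀)) Pε)
    (hn : 1 ≤ n)
    (hlip : ∀ x x', |f x - f x'| ≤ ∑ t ∈ Icc 1 n, dist (x t) (x' t)) :
    ∀ k, k + 1 ≤ n → ∀ x x' : ℕ → 𝓧,
      |gAux Pε F n f k x - gAux Pε F n f k x'| ≤
        (∑ t ∈ Icc 1 (n - k - 1), dist (x t) (x' t)) +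
          (∑ i ∈ range (k + 1), ρ ^ i) * dist (x (n - k)) (x' (n - k)) := by
  intro k
  induction k with
  | zero =>
    intro _ x x'
    simp only [gAux, Nat.sub_zero, zero_add, range_one, sum_singleton, pow_zero, one_mul]
    have hsplit : ∑ t ∈ Icc 1 n, dist (x t) (x' t)
        = (∑ t ∈ Icc 1 (n - 1), dist (x t) (x' t)) + dist (x n) (x' n) := by
      have h : n = (n - 1) + 1 := by omega
      rw [h, Finset.sum_Icc_succ_top (by omega), ← h]
    rw [← hsplit]
    exact hlip x x'
  | succ k ih =>
    intro hk x x'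
    have hk' : k + 1 ≤ n := by omega
    have hne : Nonempty 𝓨 := Measure.nonempty_of_neZero Pε
    obtain ⟨y₀⟩ := hne
    set Kk : ℝ := ∑ i ∈ range (k + 1), ρ ^ i with hKk
    have hKk0 : 0 ≤ Kk := Finset.sum_nonneg fun i _ => pow_nonneg hρ0 i
    set C : ℝ := ∑ t ∈ Icc 1 (n - k - 1), dist (x t) (x' t) with hC
    set A : 𝓨 → ℝ := fun y =>
      gAux Pε F n f k (Function.update x (n - k) (F (n - k) (x (n - k - 1)) y)) with hA
    set B : 𝓨 → ℝ := fun y =>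
      gAux Pε F n f k (Function.update x' (n - k) (F (n - k) (x' (n - k - 1)) y)) with hB
    have hgk : Measurable (gAux Pε F n f k) := gAux_measurable Pε F n f hmF hmf k
    have hupd : ∀ (z : ℕ → 𝓧), Measurable (fun y : 𝓨 =>
        Function.update z (n - k) (F (n - k) (z (n - k - 1)) y)) := fun z =>
      (measurable_updF F (n - k) (hmF (n - k))).comp (measurable_const.prodMk measurable_id)
    have hmA : Measurable A := hgk.comp (hupd x)
    have hmB : Measurable B := hgk.comp (hupd x')
    -- agreement of updates on low coordinates
    have hlow : ∀ (z z' : ℕ → 𝓧) (v v' : 𝓧),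
        ∑ t ∈ Icc 1 (n - k - 1), dist (Function.update z (n - k) v t)
          (Function.update z' (n - k) v' t) = ∑ t ∈ Icc 1 (n - k - 1), dist (z t) (z' t) := by
      intro z z' v v'
      refine Finset.sum_congr rfl fun t ht => ?_
      have htm : t ≠ n - k := by simp only [mem_Icc] at ht; omega
      rw [Function.update_of_ne htm, Function.update_of_ne htm]
    -- self-lipschitz bound for integrability
    have hselfbound : ∀ (z : ℕ → 𝓧) (y : 𝓨),
        ‖gAux Pε F n f k (Function.update z (n - k) (F (n - k) (z (n - k - 1)) y))‖ ≤
          |gAux Pε F n f k (Function.update z (n - k) (F (n - k) (z (n - k - 1)) y₀))| +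
            Kk * dist (F (n - k) (z (n - k - 1)) y) (F (n - k) (z (n - k - 1)) y₀) := by
      intro z y
      have h := ih hk' (Function.update z (n - k) (F (n - k) (z (n - k - 1)) y))
        (Function.update z (n - k) (F (n - k) (z (n - k - 1)) y₀))
      rw [hlow, Function.update_self, Function.update_self] at h
      simp only [dist_self, Finset.sum_const, smul_zero, zero_add] at h
      have h2 := abs_sub_abs_le_abs_sub
        (gAux Pε F n f k (Function.update z (n - k) (F (n - k) (z (n - k - 1)) y)))
        (gAux Pε F n f k (Function.update z (n - k) (F (n - k) (z (n - k - 1)) y₀)))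
      rw [Real.norm_eq_abs]
      linarith
    have hIbnd : ∀ z : ℕ → 𝓧, Integrable (fun y =>
        |gAux Pε F n f k (Function.update z (n - k) (F (n - k) (z (n - k - 1)) y₀))| +
          Kk * dist (F (n - k) (z (n - k - 1)) y) (F (n - k) (z (n - k - 1)) y₀)) Pε := fun z =>
      (integrable_const _).add ((hintH (n - k) (z (n - k - 1)) y₀).const_mul Kk)
    have hIA : Integrable A Pε := Integrable.mono' (hIbnd x) hmA.aestronglyMeasurable
      (Filter.Eventually.of_forall fun y => hselfbound x y)
    have hIB : Integrable B Pε := Integrable.mono' (hIbnd x') hmB.aestronglyMeasurable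
      (Filter.Eventually.of_forall fun y => hselfbound x' y)
    have hptwise : ∀ y, |A y - B y| ≤
        C + Kk * dist (F (n - k) (x (n - k - 1)) y) (F (n - k) (x' (n - k - 1)) y) := by
      intro y
      have h := ih hk' (Function.update x (n - k) (F (n - k) (x (n - k - 1)) y))
        (Function.update x' (n - k) (F (n - k) (x' (n - k - 1)) y))
      rw [hlow, Function.update_self, Function.update_self] at h
      exact h
    have key : |∫ y, A y ∂Pε - ∫ y, B y ∂Pε| ≤
        C + Kk * (ρ * dist (x (n - k - 1)) (x' (n - k - 1))) := by
      rw [← integral_sub hIA hIB]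
      calc |∫ y, (A y - B y) ∂Pε| ≤ ∫ y, |A y - B y| ∂Pε := by
            simpa [Real.norm_eq_abs] using
              norm_integral_le_integral_norm (fun y => A y - B y) (μ := Pε)
        _ ≤ ∫ y, (C + Kk * dist (F (n - k) (x (n - k - 1)) y) (F (n - k) (x' (n - k - 1)) y)) ∂Pε :=
            integral_mono (hIA.sub hIB).abs
              ((integrable_const C).add ((hintc _ _ _).const_mul Kk)) hptwise
        _ = C + Kk * ∫ y, dist (F (n - k) (x (n - k - 1)) y) (F (n - k) (x' (n - k - 1)) y) ∂Pε := by
            rw [integral_add (integrable_const C) ((hintc _ _ _).const_mul Kk), integral_const,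
              integral_const_mul]
            simp
        _ ≤ C + Kk * (ρ * dist (x (n - k - 1)) (x' (n - k - 1))) :=
            add_le_add_right (mul_le_mul_of_nonneg_left (hcontract _ _ _) hKk0) _
    -- now rewrite the goal
    show |∫ y, A y ∂Pε - ∫ y, B y ∂Pε| ≤
      (∑ t ∈ Icc 1 (n - (k + 1) - 1), dist (x t) (x' t)) +
        (∑ i ∈ range (k + 1 + 1), ρ ^ i) * dist (x (n - (k + 1))) (x' (n - (k + 1)))
    have e1 : n - (k + 1) = n - k - 1 := by omega
    have e2 : n - (k + 1) - 1 = n - k - 2 := by omega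
    have hCsplit : C = (∑ t ∈ Icc 1 (n - k - 2), dist (x t) (x' t)) +
        dist (x (n - k - 1)) (x' (n - k - 1)) := by
      rw [hC]
      have h : n - k - 1 = (n - k - 2) + 1 := by omega
      rw [h, Finset.sum_Icc_succ_top (by omega), ← h]
    have hKs : ∑ i ∈ range (k + 1 + 1), ρ ^ i = ρ * Kk + 1 := geom_sum_succ
    rw [e2, e1, hKs]
    calc |∫ y, A y ∂Pε - ∫ y, B y ∂Pε| ≤
        C + Kk * (ρ * dist (x (n - k - 1)) (x' (n - k - 1))) := key
      _ = (∑ t ∈ Icc 1 (n - k - 2), dist (x t) (x' t)) +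
          (ρ * Kk + 1) * dist (x (n - k - 1)) (x' (n - k - 1)) := by rw [hCsplit]; ring

end aux

/-- Point 2 (first part) of the main lemma: almost surely
`|d_1| ≤ K_{n-1}(ρ) G_{X_1}(X_1)` where `d_1 = g_1(X_1) - E[g_1(X_1)]` and
`G_{X_1}(x) = ∫ d(x, x') P_{X_1}(dx')`. -/
theorem first_martingale_difference_bound
    {Ω : Type*} [MeasurableSpace Ω] (μ : Measure Ω) [IsProbabilityMeasure μ]
    {𝓧 : Type*} [MetricSpace 𝓧] [CompleteSpace 𝓧] [TopologicalSpace.SeparableSpace 𝓧]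
    [MeasurableSpace 𝓧] [BorelSpace 𝓧]
    {𝓨 : Type*} [MetricSpace 𝓨] [CompleteSpace 𝓨] [TopologicalSpace.SeparableSpace 𝓨]
    [MeasurableSpace 𝓨] [BorelSpace 𝓨]
    (X : ℕ → Ω → 𝓧) (ε : ℕ → Ω → 𝓨) (Pε : Measure 𝓨) [IsProbabilityMeasure Pε]
    (hmX1 : Measurable (X 1)) (hmε : ∀ t, Measurable (ε t))
    (hlaw : ∀ t, 2 ≤ t → μ.map (ε t) = Pε)
    (hiid : iIndepFun
      (fun t : {t : ℕ // 2 ≤ t} => ε t.1) μ)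
    (hindep : IndepFun (X 1) (fun ω => fun t : {t : ℕ // 2 ≤ t} => ε t.1 ω) μ)
    (F : ℕ → 𝓧 → 𝓨 → 𝓧) (hmF : ∀ t, Measurable (Function.uncurry (F t)))
    (hchain : ∀ t, 2 ≤ t → ∀ ω, X t ω = F t (X (t - 1) ω) (ε t ω))
    (ρ : ℝ) (hρ0 : 0 ≤ ρ) (hρ1 : ρ < 1)
    (hcontract : ∀ t x x', ∫ y, dist (F t x y) (F t x' y) ∂Pε ≤ ρ * dist x x')
    (hintc : ∀ t x x', Integrable (fun y => dist (F t x y) (F t x' y)) Pε)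
    (hintH : ∀ t x y₀, Integrable (fun y => dist (F t x y) (F t x y₀)) Pε)
    (hintG : ∀ x, Integrable (fun ω => dist x (X 1 ω)) μ)
    (n : ℕ) (hn : 1 ≤ n)
    (f : (ℕ → 𝓧) → ℝ) (hmf : Measurable f)
    (hlip : ∀ x x', |f x - f x'| ≤ ∑ t ∈ Icc 1 n, dist (x t) (x' t)) :
    ∀ᵐ ω ∂μ,
      |gAux Pε F n f (n - 1) (fun i => X i ω) -
          ∫ ω', gAux Pε F n f (n - 1) (fun i => X i ω') ∂μ| ≤
        Kgeom ρ (n - 1) * ∫ ω', dist (X 1 ω) (X 1 ω') ∂μ := by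
  set K : ℝ := ∑ i ∈ range n, ρ ^ i with hKdef
  have hK0 : 0 ≤ K := Finset.sum_nonneg fun i _ => pow_nonneg hρ0 i
  have hKeq : Kgeom ρ (n - 1) = K := by
    rw [hKdef, Kgeom, show n - 1 + 1 = n from by omega, geom_sum_eq (by linarith : ρ ≠ 1) n]
    rw [show ρ ^ n - 1 = -(1 - ρ ^ n) from by ring, show ρ - 1 = -(1 - ρ) from by ring,
      neg_div_neg_eq]
  set g : (ℕ → 𝓧) → ℝ := gAux Pε F n f (n - 1) with hgdef
  have hlipg : ∀ x x' : ℕ → 𝓧, |g x - g x'| ≤ K * dist (x 1) (x' 1) := by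
    intro x x'
    have h := gAux_lip Pε F n f hmF hmf ρ hρ0 hcontract hintc hintH hn hlip (n - 1)
      (by omega) x x'
    rw [show n - (n - 1) - 1 = 0 from by omega, show n - (n - 1) = 1 from by omega,
      show n - 1 + 1 = n from by omega, Finset.Icc_eq_empty (by omega), Finset.sum_empty,
      zero_add] at h
    exact h
  have hgonly : ∀ x x' : ℕ → 𝓧, x 1 = x' 1 → g x = g x' := by
    intro x x' h
    have h2 : |g x - g x'| ≤ 0 := by simpa [h] using hlipg x x'
    have := le_antisymm h2 (abs_nonneg _)
    rw [abs_eq_zero, sub_eq_zero] at this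
    exact this
  set G : 𝓧 → ℝ := fun a => g (fun _ => a) with hGdef
  have hgX : ∀ (z : ℕ → 𝓧), g z = G (z 1) := fun z => hgonly z (fun _ => z 1) rfl
  have hGlip : ∀ a b, |G a - G b| ≤ K * dist a b := fun a b =>
    hlipg (fun _ => a) (fun _ => b)
  have hGcont : Continuous G := by
    have hL : LipschitzWith (Real.toNNReal K) G := by
      refine LipschitzWith.of_dist_le_mul fun a b => ?_
      rw [Real.dist_eq, Real.coe_toNNReal K hK0]
      exact hGlip a b
    exact hL.continuous
  have hmG : Measurable (fun ω' => G (X 1 ω')) := hGcont.measurable.comp hmX1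
  refine Filter.Eventually.of_forall fun ω => ?_
  have hIG : Integrable (fun ω' => G (X 1 ω')) μ := by
    refine Integrable.mono'
      (g := fun ω' => |G (X 1 ω)| + K * dist (X 1 ω) (X 1 ω'))
      ((integrable_const _).add ((hintG (X 1 ω)).const_mul K))
      hmG.aestronglyMeasurable (Filter.Eventually.of_forall fun ω' => ?_)
    have h1 := abs_sub_abs_le_abs_sub (G (X 1 ω')) (G (X 1 ω))
    have h2 := hGlip (X 1 ω') (X 1 ω)
    rw [dist_comm (X 1 ω') (X 1 ω)] at h2
    show |G (X 1 ω')| ≤ |G (X 1 ω)| + K * dist (X 1 ω) (X 1 ω')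
    linarith
  have hrw : ∀ ω'', g (fun i => X i ω'') = G (X 1 ω'') := fun ω'' => hgX _
  calc |g (fun i => X i ω) - ∫ ω', g (fun i => X i ω') ∂μ|
      = |∫ ω', (G (X 1 ω) - G (X 1 ω')) ∂μ| := by
        rw [integral_sub (integrable_const _) hIG, integral_const, probReal_univ,
          one_smul]
        simp only [hrw]
    _ ≤ ∫ ω', |G (X 1 ω) - G (X 1 ω')| ∂μ := by
        simpa [Real.norm_eq_abs] using
          norm_integral_le_integral_norm (fun ω' => G (X 1 ω) - G (X 1 ω')) (μ := μ)
    _ ≤ ∫ ω', K * dist (X 1 ω) (X 1 ω') ∂μ := by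
        refine integral_mono ((integrable_const _).sub hIG).abs
          ((hintG (X 1 ω)).const_mul K) fun ω' => hGlip _ _
    _ = K * ∫ ω', dist (X 1 ω) (X 1 ω') ∂μ := integral_const_mul K _
    _ = Kgeom ρ (n - 1) * ∫ ω', dist (X 1 ω) (X 1 ω') ∂μ := by rw [hKeq]
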